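/- Let f : R^q → R^m be piecewise affine with corresponding polyhedral subdivision 𝒫. Then for every x ∈ R^q, the family 𝒫'(x) = {cone(P - x) : P ∈ 𝒫(x)} is a conical subdivision of R^q, i.e., a finite family of q-dimensional polyhedral convex cones covering R^q whose pairwise intersections are either empty or common proper faces. -/

import Mathlib

open scoped RealInnerProductSpace

/-- `F` is a face of the convex set `P`. -/
def IsFace {q : ℕ} (P F : Set (EuclideanSpace ℝ (Fin q))) : Prop :=
  F ⊆ P ∧ Convex ℝ F ∧
    ∀ x ∈ P, ∀ y ∈ P, ∀ t : ℝ, 0 < t → t < 1 → t • x + (1 - t) • y ∈ F → x ∈ F ∧ y ∈ F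

/-- `F` is a proper face of `P`: a nonempty face different from `P`. -/
def IsProperFace {q : ℕ} (P F : Set (EuclideanSpace ℝ (Fin q))) : Prop :=
  IsFace P F ∧ F.Nonempty ∧ F ≠ P

/-- A polyhedral convex set: a finite intersection of closed halfspaces. -/
def IsPolyhedral {q : ℕ} (P : Set (EuclideanSpace ℝ (Fin q))) : Prop :=
  ∃ H : Finset (EuclideanSpace ℝ (Fin q) × ℝ), P = {x | ∀ p ∈ H, ⟪p.1, x⟫ ≤ p.2}

/-- A polyhedral subdivision of `ℝ^q`: a finite family of full-dimensional
(`q`-dimensional) polyhedral convex sets covering `ℝ^q`, any two distinct members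
of which intersect in the empty set or in a common proper face. -/
def IsPolyhedralSubdivision {q : ℕ} (𝒞 : Set (Set (EuclideanSpace ℝ (Fin q)))) : Prop :=
  𝒞.Finite ∧
    (∀ P ∈ 𝒞, IsPolyhedral P ∧ (interior P).Nonempty) ∧
    ⋃₀ 𝒞 = Set.univ ∧
    ∀ P ∈ 𝒞, ∀ Q ∈ 𝒞, P ≠ Q →
      P ∩ Q = ∅ ∨ (IsProperFace P (P ∩ Q) ∧ IsProperFace Q (P ∩ Q))

/-- The smallest cone containing a set `C` (here `w ∈ coneHull C` iff `w` is a
positive multiple of an element of `C`). -/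
def coneHull {q : ℕ} (C : Set (EuclideanSpace ℝ (Fin q))) :
    Set (EuclideanSpace ℝ (Fin q)) :=
  {w | ∃ μ : ℝ, 0 < μ ∧ ∃ v ∈ C, w = μ • v}

namespace ConicalAux

variable {q : ℕ}

/-- Abbreviation for the localized cone of `P` at `x`. -/
noncomputable def K (x : EuclideanSpace ℝ (Fin q)) (P : Set (EuclideanSpace ℝ (Fin q))) :
    Set (EuclideanSpace ℝ (Fin q)) :=
  coneHull ((fun p => p - x) '' P)

lemma mem_K {P : Set (EuclideanSpace ℝ (Fin q))} {x w : EuclideanSpace ℝ (Fin q)} :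
    w ∈ K x P ↔ ∃ μ : ℝ, 0 < μ ∧ ∃ p ∈ P, w = μ • (p - x) := by
  constructor
  · rintro ⟨μ, hμ, v, ⟨p, hp, rfl⟩, rfl⟩; exact ⟨μ, hμ, p, hp, rfl⟩
  · rintro ⟨μ, hμ, p, hp, rfl⟩; exact ⟨μ, hμ, p - x, ⟨p, hp, rfl⟩, rfl⟩

lemma sub_mem_K {P : Set (EuclideanSpace ℝ (Fin q))} {x p : EuclideanSpace ℝ (Fin q)}
    (hp : p ∈ P) : p - x ∈ K x P :=
  mem_K.2 ⟨1, one_pos, p, hp, (one_smul ℝ _).symm⟩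

lemma K_mono {P Q : Set (EuclideanSpace ℝ (Fin q))} (h : P ⊆ Q) {x : EuclideanSpace ℝ (Fin q)} :
    K x P ⊆ K x Q := by
  intro w hw
  obtain ⟨μ, hμ, p, hp, rfl⟩ := mem_K.1 hw
  exact mem_K.2 ⟨μ, hμ, p, h hp, rfl⟩

lemma polyhedral_closed {P : Set (EuclideanSpace ℝ (Fin q))} (hP : IsPolyhedral P) :
    IsClosed P := by
  obtain ⟨H, rfl⟩ := hP
  have : {x : EuclideanSpace ℝ (Fin q) | ∀ p ∈ H, ⟪p.1, x⟫ ≤ p.2}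
      = ⋂ p ∈ H, {x : EuclideanSpace ℝ (Fin q) | ⟪p.1, x⟫ ≤ p.2} := by
    ext z; simp
  rw [this]
  exact isClosed_biInter fun p _ => isClosed_le (Continuous.inner continuous_const continuous_id)
    continuous_const

lemma polyhedral_convex {P : Set (EuclideanSpace ℝ (Fin q))} (hP : IsPolyhedral P) :
    Convex ℝ P := by
  obtain ⟨H, rfl⟩ := hP
  intro z hz z' hz' a b ha hb hab
  intro p hp
  have h1 := hz p hp
  have h2 := hz' p hp
  have : ⟪p.1, a • z + b • z'⟫ = a * ⟪p.1, z⟫ + b * ⟪p.1, z'⟫ := by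
    rw [inner_add_right, real_inner_smul_right, real_inner_smul_right]
  rw [this]
  calc a * ⟪p.1, z⟫ + b * ⟪p.1, z'⟫ ≤ a * p.2 + b * p.2 :=
        add_le_add (mul_le_mul_of_nonneg_left h1 ha) (mul_le_mul_of_nonneg_left h2 hb)
    _ = p.2 := by rw [← add_mul, hab, one_mul]

lemma K_convex {F : Set (EuclideanSpace ℝ (Fin q))} (hF : Convex ℝ F)
    {x : EuclideanSpace ℝ (Fin q)} : Convex ℝ (K x F) := by
  intro w1 hw1 w2 hw2 a b ha hb hab
  obtain ⟨μ, hμ, p, hp, rfl⟩ := mem_K.1 hw1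
  obtain ⟨ν, hν, r, hr, rfl⟩ := mem_K.1 hw2
  rcases eq_or_lt_of_le ha with h0 | ha'
  · have hb1 : b = 1 := by linarith
    have ha0 : a = 0 := h0.symm
    subst hb1; rw [ha0]
    simpa using mem_K.2 ⟨ν, hν, r, hr, rfl⟩
  rcases eq_or_lt_of_le hb with h0 | hb'
  · have ha1 : a = 1 := by linarith
    have hb0 : b = 0 := h0.symm
    subst ha1; rw [hb0]
    simpa using mem_K.2 ⟨μ, hμ, p, hp, rfl⟩
  have hs : 0 < a * μ + b * ν := by positivity
  refine mem_K.2 ⟨a * μ + b * ν, hs, (a * μ / (a * μ + b * ν)) • p +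
    (b * ν / (a * μ + b * ν)) • r, ?_, ?_⟩
  · refine hF hp hr (by positivity) (by positivity) ?_
    field_simp
  · have hs' : a * μ + b * ν ≠ 0 := ne_of_gt hs
    match_scalars <;> field_simp <;> ring

lemma K_polyhedral {P : Set (EuclideanSpace ℝ (Fin q))} {x : EuclideanSpace ℝ (Fin q)}
    (hP : IsPolyhedral P) (hx : x ∈ P) : IsPolyhedral (K x P) := by
  classical
  obtain ⟨H, rfl⟩ := hP
  refine ⟨(H.filter (fun p => ⟪p.1, x⟫ = p.2)).image (fun p => (p.1, (0 : ℝ))), ?_⟩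
  ext w
  simp only [Set.mem_setOf_eq]
  constructor
  · intro hw a ha
    obtain ⟨μ, hμ, p, hp, rfl⟩ := mem_K.1 hw
    simp only [Finset.mem_image, Finset.mem_filter] at ha
    obtain ⟨p', ⟨hp'H, hact⟩, rfl⟩ := ha
    have h1 : ⟪p'.1, p⟫ ≤ p'.2 := hp p' hp'H
    have : ⟪p'.1, μ • (p - x)⟫ = μ * (⟪p'.1, p⟫ - ⟪p'.1, x⟫) := by
      rw [real_inner_smul_right, inner_sub_right]
    rw [this]
    simp only
    nlinarith
  · intro hw
    -- choose ε small enough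
    set T : Finset ℝ := insert (1 : ℝ) (H.image fun p =>
      if 0 < ⟪p.1, w⟫ ∧ ⟪p.1, x⟫ < p.2 then (p.2 - ⟪p.1, x⟫) / ⟪p.1, w⟫ else 1) with hT
    have hTne : T.Nonempty := ⟨1, Finset.mem_insert_self _ _⟩
    set ε := T.min' hTne with hε
    have hεpos : 0 < ε := by
      rw [hε, Finset.lt_min'_iff]
      intro y hy
      rw [hT] at hy
      rcases Finset.mem_insert.1 hy with h | h
      · rw [h]; norm_num
      · obtain ⟨p, _, rfl⟩ := Finset.mem_image.1 h
        split_ifs with h'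
        · exact div_pos (by linarith [h'.2]) h'.1
        · norm_num
    have hmem : x + ε • w ∈ {z : EuclideanSpace ℝ (Fin q) | ∀ p ∈ H, ⟪p.1, z⟫ ≤ p.2} := by
      intro p hp
      have hxp : ⟪p.1, x⟫ ≤ p.2 := hx p hp
      have hval : ⟪p.1, x + ε • w⟫ = ⟪p.1, x⟫ + ε * ⟪p.1, w⟫ := by
        rw [inner_add_right, real_inner_smul_right]
      rw [hval]
      rcases le_or_gt ⟪p.1, w⟫ 0 with hle | hgt
      · nlinarith
      · have hlt : ⟪p.1, x⟫ < p.2 := by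
          rcases lt_or_eq_of_le hxp with h | h
          · exact h
          · exfalso
            have : (p.1, (0:ℝ)) ∈ (H.filter (fun p => ⟪p.1, x⟫ = p.2)).image
                (fun p => (p.1, (0 : ℝ))) := by
              refine Finset.mem_image.2 ⟨p, Finset.mem_filter.2 ⟨hp, h⟩, rfl⟩
            have := hw _ this
            simp only at this
            linarith
        have hεle : ε ≤ (p.2 - ⟪p.1, x⟫) / ⟪p.1, w⟫ := by
          have hTm : (p.2 - ⟪p.1, x⟫) / ⟪p.1, w⟫ ∈ T := by
            rw [hT]
            refine Finset.mem_insert_of_mem (Finset.mem_image.2 ⟨p, hp, ?_⟩)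
            rw [if_pos ⟨hgt, hlt⟩]
          exact Finset.min'_le _ _ hTm
        have := (le_div_iff₀ hgt).1 hεle
        linarith
    refine mem_K.2 ⟨ε⁻¹, inv_pos.2 hεpos, x + ε • w, hmem, ?_⟩
    rw [add_sub_cancel_left, smul_smul, inv_mul_cancel₀ (ne_of_gt hεpos), one_smul]

lemma K_inter {P Q : Set (EuclideanSpace ℝ (Fin q))} {x : EuclideanSpace ℝ (Fin q)}
    (hPc : Convex ℝ P) (hQc : Convex ℝ Q) (hxP : x ∈ P) (hxQ : x ∈ Q) :
    K x P ∩ K x Q = K x (P ∩ Q) := by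
  apply Set.Subset.antisymm
  · rintro w ⟨hw1, hw2⟩
    obtain ⟨μ, hμ, p, hp, hwp⟩ := mem_K.1 hw1
    obtain ⟨ν, hν, r, hr, hwr⟩ := mem_K.1 hw2
    set ε := min μ⁻¹ ν⁻¹ with hε
    have hεpos : 0 < ε := lt_min (inv_pos.2 hμ) (inv_pos.2 hν)
    have hεμ : ε * μ ≤ 1 := by
      have : ε ≤ μ⁻¹ := min_le_left _ _
      calc ε * μ ≤ μ⁻¹ * μ := by nlinarith
        _ = 1 := inv_mul_cancel₀ (ne_of_gt hμ)
    have hεν : ε * ν ≤ 1 := by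
      have : ε ≤ ν⁻¹ := min_le_right _ _
      calc ε * ν ≤ ν⁻¹ * ν := by nlinarith
        _ = 1 := inv_mul_cancel₀ (ne_of_gt hν)
    have hP' : x + ε • w ∈ P := by
      have := hPc hxP hp (a := 1 - ε * μ) (b := ε * μ) (by linarith)
        (by positivity) (by ring)
      have heq : (1 - ε * μ) • x + (ε * μ) • p = x + ε • w := by
        rw [hwp]; module
      rwa [heq] at this
    have hQ' : x + ε • w ∈ Q := by
      have := hQc hxQ hr (a := 1 - ε * ν) (b := ε * ν) (by linarith)
        (by positivity) (by ring)
      have heq : (1 - ε * ν) • x + (ε * ν) • r = x + ε • w := by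
        rw [hwr]; module
      rwa [heq] at this
    refine mem_K.2 ⟨ε⁻¹, inv_pos.2 hεpos, x + ε • w, ⟨hP', hQ'⟩, ?_⟩
    rw [add_sub_cancel_left, smul_smul, inv_mul_cancel₀ (ne_of_gt hεpos), one_smul]
  · exact Set.subset_inter (K_mono Set.inter_subset_left) (K_mono Set.inter_subset_right)

lemma K_face {P F : Set (EuclideanSpace ℝ (Fin q))} {x : EuclideanSpace ℝ (Fin q)}
    (hPc : Convex ℝ P) (hF : IsFace P F) (hxF : x ∈ F) :
    IsFace (K x P) (K x F) := by
  obtain ⟨hFP, hFc, hface⟩ := hF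
  have hxP : x ∈ P := hFP hxF
  refine ⟨K_mono hFP, K_convex hFc, ?_⟩
  rintro u hu v hv t ht0 ht1 hmem
  obtain ⟨μ, hμ, p, hp, rfl⟩ := mem_K.1 hu
  obtain ⟨ν, hν, r, hr, rfl⟩ := mem_K.1 hv
  obtain ⟨lam, hlam, g, hg, hgeq⟩ := mem_K.1 hmem
  have ht1' : (0:ℝ) < 1 - t := by linarith
  set s := t * μ + (1 - t) * ν with hs
  have hspos : 0 < s := by rw [hs]; positivity
  have hsne : s ≠ 0 := ne_of_gt hspos
  set h := (t * μ / s) • p + ((1 - t) * ν / s) • r with hh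
  have hhP : h ∈ P := hPc hp hr (div_nonneg (by positivity) hspos.le)
    (div_nonneg (by positivity) hspos.le) (by field_simp; exact hs.symm)
  have veq : (t * μ) • (p - x) + ((1 - t) * ν) • (r - x) = lam • (g - x) := by
    rw [← hgeq]; module
  have h1 : h - x = s⁻¹ • ((t * μ) • (p - x) + ((1 - t) * ν) • (r - x)) := by
    rw [hh, hs]
    have : t * μ + (1 - t) * ν ≠ 0 := by rw [← hs]; exact hsne
    match_scalars <;> (field_simp; try ring)
  have h2 : h - x = (lam / s) • (g - x) := by
    rw [h1, veq, smul_smul, inv_mul_eq_div]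
  have hkey : h = x + (lam / s) • (g - x) := by rw [← h2]; module
  have hκpos : 0 < lam / s := div_pos hlam hspos
  have hhF : h ∈ F := by
    rcases le_or_gt (lam / s) 1 with hκ | hκ
    · have : (lam / s) • g + (1 - lam / s) • x = h := by rw [hkey]; module
      rw [← this]
      exact hFc hg hxF hκpos.le (by linarith) (by ring)
    · have hinvpos : 0 < (lam / s)⁻¹ := inv_pos.2 hκpos
      have hinvlt : (lam / s)⁻¹ < 1 := by
        rw [inv_lt_one_iff₀]; right; exact hκ
      have hgeq2 : (lam / s)⁻¹ • h + (1 - (lam / s)⁻¹) • x = g := by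
        rw [hkey]
        have : (lam / s) ≠ 0 := ne_of_gt hκpos
        match_scalars <;> (field_simp; try ring)
      exact (hface h hhP x hxP _ hinvpos hinvlt (by rw [hgeq2]; exact hg)).1
  have hcoefpos : 0 < t * μ / s := div_pos (by positivity) hspos
  have hcoeflt : t * μ / s < 1 := by
    rw [div_lt_one hspos, hs]
    nlinarith
  have hhcomb : (t * μ / s) • p + (1 - t * μ / s) • r = h := by
    rw [hh, hs]
    have : t * μ + (1 - t) * ν ≠ 0 := by rw [← hs]; exact hsne
    match_scalars <;> (field_simp; try ring)
  obtain ⟨hpF, hrF⟩ := hface p hp r hr _ hcoefpos hcoeflt (by rw [hhcomb]; exact hhF)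
  exact ⟨mem_K.2 ⟨μ, hμ, p, hpF, rfl⟩, mem_K.2 ⟨ν, hν, r, hrF, rfl⟩⟩

lemma eq_of_K_eq {P F : Set (EuclideanSpace ℝ (Fin q))} {x : EuclideanSpace ℝ (Fin q)}
    (hF : IsFace P F) (hxF : x ∈ F) (h : K x F = K x P) : F = P := by
  obtain ⟨hFP, hFc, hface⟩ := hF
  have hxP : x ∈ P := hFP hxF
  refine Set.Subset.antisymm hFP fun p hp => ?_
  have : p - x ∈ K x F := h ▸ sub_mem_K hp
  obtain ⟨μ, hμ, g, hg, hgeq⟩ := mem_K.1 this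
  rcases le_or_gt μ 1 with hμ1 | hμ1
  · have : μ • g + (1 - μ) • x = p := by
      have : p = x + μ • (g - x) := by rw [← hgeq]; module
      rw [this]; module
    rw [← this]
    exact hFc hg hxF hμ.le (by linarith) (by ring)
  · have hinvpos : 0 < μ⁻¹ := inv_pos.2 hμ
    have hinvlt : μ⁻¹ < 1 := by rw [inv_lt_one_iff₀]; right; exact hμ1
    have hgeq2 : μ⁻¹ • p + (1 - μ⁻¹) • x = g := by
      have hp' : p = x + μ • (g - x) := by rw [← hgeq]; module
      rw [hp']
      have : μ ≠ 0 := ne_of_gt hμ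
      match_scalars <;> (field_simp; try ring)
    exact (hface p hp x hxP _ hinvpos hinvlt (by rw [hgeq2]; exact hg)).1

lemma zero_mem_K {P : Set (EuclideanSpace ℝ (Fin q))} {x : EuclideanSpace ℝ (Fin q)}
    (hx : x ∈ P) : (0 : EuclideanSpace ℝ (Fin q)) ∈ K x P :=
  mem_K.2 ⟨1, one_pos, x, hx, by simp⟩

lemma K_interior_nonempty {P : Set (EuclideanSpace ℝ (Fin q))} {x : EuclideanSpace ℝ (Fin q)}
    (hP : (interior P).Nonempty) : (interior (K x P)).Nonempty := by
  obtain ⟨y, hy⟩ := hP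
  refine ⟨y - x, ?_⟩
  rw [mem_interior]
  refine ⟨(fun z => z + x) ⁻¹' interior P, ?_, ?_, ?_⟩
  · intro z hz
    exact mem_K.2 ⟨1, one_pos, z + x, interior_subset hz, by simp⟩
  · exact (continuous_id.add continuous_const).isOpen_preimage _ isOpen_interior
  · simpa using hy

lemma cover {𝒞 : Set (Set (EuclideanSpace ℝ (Fin q)))} (h𝒞 : IsPolyhedralSubdivision 𝒞)
    (x w : EuclideanSpace ℝ (Fin q)) : ∃ P ∈ 𝒞, x ∈ P ∧ w ∈ K x P := by
  classical
  obtain ⟨hfin, hmem, hcov, _⟩ := h𝒞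
  haveI : Finite ↥𝒞 := hfin.to_subtype
  have hchoice : ∀ n : ℕ, ∃ P : ↥𝒞, x + ((n : ℝ) + 1)⁻¹ • w ∈ (P : Set _) := by
    intro n
    have : x + ((n : ℝ) + 1)⁻¹ • w ∈ ⋃₀ 𝒞 := by rw [hcov]; trivial
    obtain ⟨P, hP, hxP⟩ := this
    exact ⟨⟨P, hP⟩, hxP⟩
  choose F hF using hchoice
  obtain ⟨P₀, hP₀⟩ := Finite.exists_infinite_fiber F
  have hSinf : (F ⁻¹' {P₀}).Infinite := Set.infinite_coe_iff.1 hP₀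
  have hclosed : IsClosed (P₀ : Set (EuclideanSpace ℝ (Fin q))) :=
    polyhedral_closed (P := (P₀ : Set (EuclideanSpace ℝ (Fin q)))) (hmem _ P₀.2).1
  have hxP₀ : x ∈ (P₀ : Set _) := by
    rw [← hclosed.closure_eq]
    rw [Metric.mem_closure_iff]
    intro ε hε
    obtain ⟨N, hN⟩ := exists_nat_gt (‖w‖ / ε)
    obtain ⟨n, hnS, hnN⟩ : ∃ n ∈ F ⁻¹' {P₀}, N ≤ n := by
      by_contra hcon
      push_neg at hcon
      exact hSinf ((Set.finite_Iio N).subset fun n hn => (hcon n hn))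
    have hFn : F n = P₀ := hnS
    refine ⟨x + ((n : ℝ) + 1)⁻¹ • w, by have := hF n; rwa [hFn] at this, ?_⟩
    rw [dist_eq_norm]
    have heq : x - (x + ((n : ℝ) + 1)⁻¹ • w) = -(((n : ℝ) + 1)⁻¹ • w) := by module
    rw [heq, norm_neg, norm_smul, Real.norm_eq_abs,
      abs_of_pos (by positivity : (0:ℝ) < ((n : ℝ) + 1)⁻¹)]
    rw [inv_mul_lt_iff₀ (by positivity : (0:ℝ) < (n : ℝ) + 1)]
    have hw : ‖w‖ < N * ε := by
      have := (div_lt_iff₀ hε).1 hN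
      linarith
    have hNn : (N : ℝ) ≤ (n : ℝ) := Nat.cast_le.2 hnN
    nlinarith
  obtain ⟨n, hnS⟩ := hSinf.nonempty
  have hxn : x + ((n : ℝ) + 1)⁻¹ • w ∈ (P₀ : Set _) := by
    have hFn : F n = P₀ := hnS
    have := hF n; rwa [hFn] at this
  refine ⟨P₀, P₀.2, hxP₀, mem_K.2 ⟨(n : ℝ) + 1, by positivity, _, hxn, ?_⟩⟩
  rw [add_sub_cancel_left, smul_smul, mul_inv_cancel₀ (by positivity), one_smul]

end ConicalAux

theorem localized_family_is_conical_subdivision {q m : ℕ}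
    (𝒞 : Set (Set (EuclideanSpace ℝ (Fin q)))) (h𝒞 : IsPolyhedralSubdivision 𝒞)
    (f : EuclideanSpace ℝ (Fin q) → EuclideanSpace ℝ (Fin m)) (hf : Continuous f)
    (haff : ∀ P ∈ 𝒞, ∃ (A : EuclideanSpace ℝ (Fin q) →ₗ[ℝ] EuclideanSpace ℝ (Fin m))
      (b : EuclideanSpace ℝ (Fin m)), ∀ z ∈ P, f z = A z + b)
    (x : EuclideanSpace ℝ (Fin q)) :
    IsPolyhedralSubdivision
      {Q | ∃ P ∈ 𝒞, x ∈ P ∧ Q = coneHull ((fun p => p - x) '' P)} ∧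
    ∀ Q ∈ {Q | ∃ P ∈ 𝒞, x ∈ P ∧ Q = coneHull ((fun p => p - x) '' P)},
      ∀ v ∈ Q, ∀ c : ℝ, 0 < c → c • v ∈ Q := by
  open ConicalAux in
  obtain ⟨hfin, hmem, hcov, hpair⟩ := h𝒞
  set 𝒟 : Set (Set (EuclideanSpace ℝ (Fin q))) :=
    {Q | ∃ P ∈ 𝒞, x ∈ P ∧ Q = coneHull ((fun p => p - x) '' P)} with h𝒟
  have hKdef : ∀ P : Set (EuclideanSpace ℝ (Fin q)),
      coneHull ((fun p => p - x) '' P) = ConicalAux.K x P := fun P => rfl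
  constructor
  · refine ⟨?_, ?_, ?_, ?_⟩
    · -- finiteness
      have himg : 𝒟 = (fun P => ConicalAux.K x P) '' {P ∈ 𝒞 | x ∈ P} := by
        ext Q
        constructor
        · rintro ⟨P, hP, hxP, rfl⟩; exact ⟨P, ⟨hP, hxP⟩, rfl⟩
        · rintro ⟨P, ⟨hP, hxP⟩, rfl⟩; exact ⟨P, hP, hxP, rfl⟩
      rw [himg]
      exact (hfin.subset (Set.sep_subset _ _)).image _
    · -- polyhedral and interior
      rintro Q ⟨P, hP, hxP, rfl⟩
      rw [hKdef]
      exact ⟨ConicalAux.K_polyhedral (by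
          obtain ⟨H, hH⟩ := (hmem P hP).1; exact ⟨H, hH⟩) hxP,
        ConicalAux.K_interior_nonempty (hmem P hP).2⟩
    · -- covering
      apply Set.eq_univ_of_forall
      intro w
      obtain ⟨P, hP, hxP, hwP⟩ := ConicalAux.cover ⟨hfin, hmem, hcov, hpair⟩ x w
      exact ⟨ConicalAux.K x P, ⟨P, hP, hxP, rfl⟩, hwP⟩
    · -- pairwise proper faces
      rintro Q1 ⟨P, hP, hxP, rfl⟩ Q2 ⟨R, hR, hxR, rfl⟩ hne
      simp only [hKdef] at hne ⊢
      have hPR : P ≠ R := by rintro rfl; exact hne rfl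
      rcases hpair P hP R hR hPR with hempty | ⟨hFP, hFR⟩
      · exact absurd (Set.eq_empty_iff_forall_notMem.1 hempty x) (by simp [hxP, hxR])
      right
      have hxF : x ∈ P ∩ R := ⟨hxP, hxR⟩
      have hPconv : Convex ℝ P := ConicalAux.polyhedral_convex (hmem P hP).1
      have hRconv : Convex ℝ R := ConicalAux.polyhedral_convex (hmem R hR).1
      have hint : ConicalAux.K x P ∩ ConicalAux.K x R = ConicalAux.K x (P ∩ R) :=
        ConicalAux.K_inter hPconv hRconv hxP hxR
      rw [hint]
      refine ⟨⟨ConicalAux.K_face hPconv hFP.1 hxF, ⟨0, ConicalAux.zero_mem_K hxF⟩, ?_⟩,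
        ⟨ConicalAux.K_face hRconv hFR.1 hxF, ⟨0, ConicalAux.zero_mem_K hxF⟩, ?_⟩⟩
      · intro h
        exact hFP.2.2 (ConicalAux.eq_of_K_eq hFP.1 hxF h)
      · intro h
        exact hFR.2.2 (ConicalAux.eq_of_K_eq hFR.1 hxF h)
  · -- cone property
    rintro Q ⟨P, hP, hxP, rfl⟩ v hv c hc
    obtain ⟨μ, hμ, v₀, hv₀, rfl⟩ := hv
    exact ⟨c * μ, mul_pos hc hμ, v₀, hv₀, by rw [smul_smul]⟩
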